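/- For the transposition map T on a d-dimensional system (with Choi matrix the swap operator), the robustness R(T) with respect to CPTNI maps equals (d−1)/2, and the base norm ‖T‖_CPTNI equals d. -/

import Mathlib

open Matrix Kronecker ComplexOrder

/-- Singular values of a square complex matrix. -/
noncomputable def singVals {n : Type*} [Fintype n] [DecidableEq n]
    (X : Matrix n n ℂ) : n → ℝ :=
  fun i => Real.sqrt ((Matrix.isHermitian_mul_conjTranspose_self X).eigenvalues i)

/-- Trace norm (Schatten 1-norm): sum of singular values; for Hermitian `X` this
is the sum of the absolute values of the eigenvalues. -/
noncomputable def traceNorm {n : Type*} [Fintype n] [DecidableEq n]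
    (X : Matrix n n ℂ) : ℝ :=
  ∑ i, singVals X i

/-- Operator norm (Schatten ∞-norm): largest singular value. -/
noncomputable def opNorm {n : Type*} [Fintype n] [DecidableEq n]
    (X : Matrix n n ℂ) : ℝ :=
  ⨆ i, singVals X i

/-- A density operator: positive semidefinite with unit trace. -/
def Density {n : Type*} [Fintype n] (ρ : Matrix n n ℂ) : Prop :=
  ρ.PosSemidef ∧ ρ.trace = 1

/-- Loewner order: `X ⊑ Y` iff `Y - X` is positive semidefinite. -/
def Loewner {n : Type*} [Fintype n] (X Y : Matrix n n ℂ) : Prop :=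
  (Y - X).PosSemidef

/-- Partial trace over the second (B) factor. -/
noncomputable def ptraceB {a b : Type*} [Fintype b] (M : Matrix (a × b) (a × b) ℂ) :
    Matrix a a ℂ :=
  Matrix.of fun i j => ∑ k, M (i, k) (j, k)

/-- Choi matrix of a linear map on matrices. -/
noncomputable def choi {da db : ℕ}
    (Φ : Matrix (Fin da) (Fin da) ℂ →ₗ[ℂ] Matrix (Fin db) (Fin db) ℂ) :
    Matrix (Fin da × Fin db) (Fin da × Fin db) ℂ :=
  Matrix.of fun p q => Φ (Matrix.single p.1 q.1 1) p.2 q.2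

/-- Completely positive and trace non-increasing, via the Choi matrix. -/
def IsCPTNI {da db : ℕ}
    (Φ : Matrix (Fin da) (Fin da) ℂ →ₗ[ℂ] Matrix (Fin db) (Fin db) ℂ) : Prop :=
  (choi Φ).PosSemidef ∧ Loewner (ptraceB (choi Φ)) 1

/-- Completely positive and trace preserving, via the Choi matrix. -/
def IsCPTP {da db : ℕ}
    (Φ : Matrix (Fin da) (Fin da) ℂ →ₗ[ℂ] Matrix (Fin db) (Fin db) ℂ) : Prop :=
  (choi Φ).PosSemidef ∧ ptraceB (choi Φ) = 1

/-- The map `id_A ⊗ Φ` acting on operators on `A ⊗ A`. -/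
noncomputable def idTensor {da db : ℕ}
    (Φ : Matrix (Fin da) (Fin da) ℂ →ₗ[ℂ] Matrix (Fin db) (Fin db) ℂ)
    (M : Matrix (Fin da × Fin da) (Fin da × Fin da) ℂ) :
    Matrix (Fin da × Fin db) (Fin da × Fin db) ℂ :=
  Matrix.of fun p q => Φ (Matrix.of fun k l => M (p.1, k) (q.1, l)) p.2 q.2

/-- Diamond norm: `max_ρ ‖(id ⊗ Φ)(ρ)‖₁` over bipartite density operators. -/
noncomputable def diamondNorm {da db : ℕ}
    (Φ : Matrix (Fin da) (Fin da) ℂ →ₗ[ℂ] Matrix (Fin db) (Fin db) ℂ) : ℝ :=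
  sSup {x : ℝ | ∃ ρ : Matrix (Fin da × Fin da) (Fin da × Fin da) ℂ,
    Density ρ ∧ x = traceNorm (idTensor Φ ρ)}

/-- Base norm with respect to CPTNI maps. -/
noncomputable def cptniNorm {da db : ℕ}
    (Φ : Matrix (Fin da) (Fin da) ℂ →ₗ[ℂ] Matrix (Fin db) (Fin db) ℂ) : ℝ :=
  sInf {s : ℝ | ∃ lp lm : ℝ, ∃ Λp Λm :
      Matrix (Fin da) (Fin da) ℂ →ₗ[ℂ] Matrix (Fin db) (Fin db) ℂ,
    0 ≤ lp ∧ 0 ≤ lm ∧ IsCPTNI Λp ∧ IsCPTNI Λm ∧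
    Φ = (lp : ℂ) • Λp - (lm : ℂ) • Λm ∧ s = lp + lm}

/-- The transposition map on a `d`-dimensional system. -/
noncomputable def transposeMap (d : ℕ) :
    Matrix (Fin d) (Fin d) ℂ →ₗ[ℂ] Matrix (Fin d) (Fin d) ℂ where
  toFun := Matrix.transpose
  map_add' := fun _ _ => Matrix.transpose_add _ _
  map_smul' := fun _ _ => Matrix.transpose_smul _ _

/-- Robustness with respect to CPTNI maps:
`R(Φ) = min { λ ≥ 0 : (Φ + λΛ)/(1+λ) CPTNI for some CPTNI Λ }`. -/
noncomputable def robustnessCPTNI {da db : ℕ} (Φ : Matrix (Fin da) (Fin da) ℂ →ₗ[ℂ] Matrix (Fin db) (Fin db) ℂ) : ℝ :=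
  sInf {l : ℝ | 0 ≤ l ∧ ∃ Λ : Matrix (Fin da) (Fin da) ℂ →ₗ[ℂ] Matrix (Fin db) (Fin db) ℂ, IsCPTNI Λ ∧
    IsCPTNI (((1 / (1 + l) : ℝ) : ℂ) • (Φ + ((l : ℝ) : ℂ) • Λ))}

section Helpers

lemma psd_trace_nonneg {n : Type*} [Fintype n] [DecidableEq n] {A : Matrix n n ℂ}
    (hA : A.PosSemidef) : 0 ≤ A.trace := by
  have h : ∀ i, 0 ≤ A i i := fun i => by
    have := hA.dotProduct_mulVec_nonneg (Pi.single i 1)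
    simpa [dotProduct, Pi.single_apply, mulVec] using this
  exact Finset.sum_nonneg fun i _ => h i

lemma psd_trace_mul_nonneg {n : Type*} [Fintype n] [DecidableEq n] {A B : Matrix n n ℂ}
    (hA : A.PosSemidef) (hB : B.PosSemidef) : 0 ≤ (A * B).trace := by
  obtain ⟨C, rfl⟩ : ∃ C : Matrix n n ℂ, B = Cᴴ * C := by
    open scoped MatrixOrder in
    exact ⟨CFC.sqrt B, by rw [← Matrix.star_eq_conjTranspose, (CFC.sqrt_nonneg B).isSelfAdjoint.star_eq, CFC.sqrt_mul_sqrt_self B (Matrix.nonneg_iff_posSemidef.mpr hB)]⟩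
  rw [← Matrix.mul_assoc, trace_mul_comm, ← Matrix.mul_assoc]
  exact psd_trace_nonneg (hA.mul_mul_conjTranspose_same C)

lemma psd_smul {n : Type*} [Fintype n] [DecidableEq n] {A : Matrix n n ℂ} {c : ℝ}
    (hc : 0 ≤ c) (hA : A.PosSemidef) : ((c : ℂ) • A).PosSemidef := by
  refine posSemidef_iff_dotProduct_mulVec.mpr ⟨?_, ?_⟩
  · unfold Matrix.IsHermitian
    rw [conjTranspose_smul, hA.1.eq]
    simp
  · intro x
    have := hA.dotProduct_mulVec_nonneg x
    rw [Matrix.smul_mulVec, dotProduct_smul]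
    exact smul_nonneg (by exact_mod_cast hc) this

/-- The swap matrix. -/
noncomputable def Sw (d : ℕ) : Matrix (Fin d × Fin d) (Fin d × Fin d) ℂ :=
  Matrix.of fun p q => if p = q.swap then 1 else 0

lemma Sw_herm (d : ℕ) : (Sw d).IsHermitian := by
  ext p q
  simp only [conjTranspose_apply, Sw, Matrix.of_apply]
  have : q = p.swap ↔ p = q.swap := by
    constructor <;> (intro h; subst h; simp)
  by_cases h : p = q.swap <;> simp [h, this]

lemma Sw_mul_Sw (d : ℕ) : Sw d * Sw d = 1 := by
  ext p q
  simp only [Matrix.mul_apply, Sw, Matrix.of_apply, Matrix.one_apply]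
  rw [Finset.sum_eq_single p.swap]
  · simp [Prod.ext_iff, and_comm]
  · intro r _ hr
    have : ¬ p = r.swap := fun h => hr (by simp [h])
    simp [this]
  · simp

lemma trace_Sw (d : ℕ) : (Sw d).trace = (d : ℂ) := by
  simp only [Matrix.trace, Matrix.diag, Sw, Matrix.of_apply]
  rw [Fintype.sum_prod_type]
  simp [Prod.ext_iff, eq_comm]

lemma ptraceB_Sw (d : ℕ) : ptraceB (Sw d) = 1 := by
  ext i j
  simp only [ptraceB, Sw, Matrix.of_apply, Matrix.one_apply, Prod.swap, Prod.ext_iff]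
  by_cases h : i = j
  · subst h
    simp [eq_comm, Finset.sum_ite_eq]
  · rw [Finset.sum_eq_zero (fun k _ => by
      simp only [ite_eq_right_iff]
      rintro ⟨rfl, rfl⟩
      exact absurd rfl h)]
    simp [h]

lemma ptraceB_one (d : ℕ) :
    ptraceB (1 : Matrix (Fin d × Fin d) (Fin d × Fin d) ℂ) = (d : ℂ) • 1 := by
  ext i j
  simp only [ptraceB, Matrix.of_apply, Matrix.one_apply, Matrix.smul_apply, Prod.mk.injEq,
    smul_eq_mul]
  by_cases h : i = j <;> simp [h]

lemma trace_ptraceB {a b : Type*} [Fintype a] [Fintype b] (M : Matrix (a × b) (a × b) ℂ) :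
    (ptraceB M).trace = M.trace := by
  simp only [Matrix.trace, Matrix.diag, ptraceB, Matrix.of_apply]
  rw [← Finset.sum_product']
  rfl

/-- The map `X ↦ (tr X) • 1`. -/
noncomputable def trMap (d : ℕ) :
    Matrix (Fin d) (Fin d) ℂ →ₗ[ℂ] Matrix (Fin d) (Fin d) ℂ where
  toFun := fun X => X.trace • (1 : Matrix (Fin d) (Fin d) ℂ)
  map_add' := fun X Y => by
    show (X + Y).trace • _ = X.trace • _ + Y.trace • _
    rw [trace_add, add_smul]
  map_smul' := fun c X => by
    show (c • X).trace • _ = c • (X.trace • _)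
    rw [trace_smul, smul_eq_mul, smul_smul]

lemma choi_transposeMap (d : ℕ) : choi (transposeMap d) = Sw d := by
  ext p q
  simp only [choi, transposeMap, Sw, Matrix.of_apply, LinearMap.coe_mk, AddHom.coe_mk,
    Matrix.transpose_apply, Matrix.single, Prod.ext_iff, Prod.swap]
  by_cases h1 : p.1 = q.2 <;> by_cases h2 : p.2 = q.1 <;> simp [h1, h2] <;> tauto

lemma choi_trMap (d : ℕ) : choi (trMap d) = 1 := by
  have tr_std : ∀ i j : Fin d, (Matrix.single i j (1:ℂ)).trace = if i = j then 1 else 0 := by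
    intro i j
    simp only [Matrix.trace, Matrix.diag, Matrix.single, Matrix.of_apply]
    by_cases h : i = j
    · subst h; simp [eq_comm, Finset.sum_ite_eq]
    · rw [Finset.sum_eq_zero (fun k _ => by
        simp only [ite_eq_right_iff]
        rintro ⟨rfl, rfl⟩; exact absurd rfl h)]
      simp [h]
  ext p q
  simp only [choi, trMap, Matrix.of_apply, LinearMap.coe_mk, AddHom.coe_mk, Matrix.smul_apply,
    smul_eq_mul, tr_std, Matrix.one_apply, Prod.ext_iff]
  by_cases h1 : p.1 = q.1 <;> by_cases h2 : p.2 = q.2 <;> simp [h1, h2]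

lemma choi_add {da db : ℕ} (Φ Ψ : Matrix (Fin da) (Fin da) ℂ →ₗ[ℂ] Matrix (Fin db) (Fin db) ℂ) :
    choi (Φ + Ψ) = choi Φ + choi Ψ := by
  ext p q; simp [choi]

lemma choi_sub {da db : ℕ} (Φ Ψ : Matrix (Fin da) (Fin da) ℂ →ₗ[ℂ] Matrix (Fin db) (Fin db) ℂ) :
    choi (Φ - Ψ) = choi Φ - choi Ψ := by
  ext p q; simp [choi]

lemma choi_smul {da db : ℕ} (c : ℂ) (Φ : Matrix (Fin da) (Fin da) ℂ →ₗ[ℂ] Matrix (Fin db) (Fin db) ℂ) :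
    choi (c • Φ) = c • choi Φ := by
  ext p q; simp [choi]

lemma one_add_Sw_psd (d : ℕ) : (1 + Sw d).PosSemidef := by
  have herm : (1 + Sw d).IsHermitian := by
    unfold Matrix.IsHermitian
    rw [conjTranspose_add, conjTranspose_one, (Sw_herm d).eq]
  have h2 : (1 + Sw d) * (1 + Sw d) = (2:ℂ) • (1 + Sw d) := by
    rw [add_mul, mul_add, mul_add, Sw_mul_Sw, two_smul]
    simp only [Matrix.one_mul, Matrix.mul_one]
    abel
  have hsq : (1 + Sw d) = ((1/2 : ℝ) : ℂ) • ((1 + Sw d)ᴴ * (1 + Sw d)) := by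
    rw [herm.eq, h2, smul_smul]
    norm_num
  rw [hsq]
  exact psd_smul (by norm_num) (posSemidef_conjTranspose_mul_self _)

lemma one_sub_Sw_psd (d : ℕ) : (1 - Sw d).PosSemidef := by
  have herm : (1 - Sw d).IsHermitian := by
    unfold Matrix.IsHermitian
    rw [conjTranspose_sub, conjTranspose_one, (Sw_herm d).eq]
  have h2 : (1 - Sw d) * (1 - Sw d) = (2:ℂ) • (1 - Sw d) := by
    rw [sub_mul, mul_sub, mul_sub, Sw_mul_Sw, two_smul]
    simp only [Matrix.one_mul, Matrix.mul_one]
    abel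
  have hsq : (1 - Sw d) = ((1/2 : ℝ) : ℂ) • ((1 - Sw d)ᴴ * (1 - Sw d)) := by
    rw [herm.eq, h2, smul_smul]
    norm_num
  rw [hsq]
  exact psd_smul (by norm_num) (posSemidef_conjTranspose_mul_self _)

lemma ptraceB_add {a b : Type*} [Fintype b] (M N : Matrix (a × b) (a × b) ℂ) :
    ptraceB (M + N) = ptraceB M + ptraceB N := by
  ext i j; simp [ptraceB, Finset.sum_add_distrib]

lemma ptraceB_sub {a b : Type*} [Fintype b] (M N : Matrix (a × b) (a × b) ℂ) :
    ptraceB (M - N) = ptraceB M - ptraceB N := by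
  ext i j; simp [ptraceB, Finset.sum_sub_distrib]

lemma ptraceB_smul {a b : Type*} [Fintype b] (c : ℂ) (M : Matrix (a × b) (a × b) ℂ) :
    ptraceB (c • M) = c • ptraceB M := by
  ext i j; simp [ptraceB, Finset.mul_sum]

lemma trace_choi_le {da db : ℕ}
    {Λ : Matrix (Fin da) (Fin da) ℂ →ₗ[ℂ] Matrix (Fin db) (Fin db) ℂ}
    (h : IsCPTNI Λ) : (choi Λ).trace ≤ (da : ℂ) := by
  have h0 : 0 ≤ ((1 : Matrix (Fin da) (Fin da) ℂ) - ptraceB (choi Λ)).trace :=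
    psd_trace_nonneg h.2
  rw [trace_sub, trace_one] at h0
  simp only [Fintype.card_fin] at h0
  rw [← trace_ptraceB (choi Λ)]
  exact sub_nonneg.mp h0

lemma two_nonneg_C : (0:ℂ) ≤ 2 := by
  have : ((0:ℝ):ℂ) ≤ ((2:ℝ):ℂ) := Complex.real_le_real.mpr (by norm_num)
  simpa using this

lemma pairing_bound {d : ℕ} {C : Matrix (Fin d × Fin d) (Fin d × Fin d) ℂ}
    (hC : C.PosSemidef) (htr : C.trace ≤ (d : ℂ)) :
    ((1 - Sw d) * C).trace ≤ 2 * (d:ℂ) ∧ ((1 + Sw d) * C).trace ≤ 2 * (d:ℂ) := by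
  have hsum : ((1 - Sw d) * C).trace + ((1 + Sw d) * C).trace = 2 * C.trace := by
    rw [← trace_add, ← add_mul]
    have : (1 - Sw d) + (1 + Sw d) = (2:ℂ) • (1 : Matrix (Fin d × Fin d) (Fin d × Fin d) ℂ) := by
      rw [two_smul]; abel
    rw [this, smul_mul_assoc, Matrix.one_mul, trace_smul, smul_eq_mul]
  have h1 : 0 ≤ ((1 - Sw d) * C).trace := psd_trace_mul_nonneg (one_sub_Sw_psd d) hC
  have h2 : 0 ≤ ((1 + Sw d) * C).trace := psd_trace_mul_nonneg (one_add_Sw_psd d) hC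
  have htr2 : 2 * C.trace ≤ 2 * (d:ℂ) := mul_le_mul_of_nonneg_left htr two_nonneg_C
  constructor
  · calc ((1 - Sw d) * C).trace ≤ ((1 - Sw d) * C).trace + ((1 + Sw d) * C).trace :=
          le_add_of_nonneg_right h2
      _ = 2 * C.trace := hsum
      _ ≤ 2 * (d:ℂ) := htr2
  · calc ((1 + Sw d) * C).trace ≤ ((1 - Sw d) * C).trace + ((1 + Sw d) * C).trace :=
          le_add_of_nonneg_left h1
      _ = 2 * C.trace := hsum
      _ ≤ 2 * (d:ℂ) := htr2

lemma trace_one_sub_Sw_mul_Sw (d : ℕ) :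
    ((1 - Sw d) * Sw d).trace = (d:ℂ) - (d:ℂ) * (d:ℂ) := by
  rw [sub_mul, Matrix.one_mul, Sw_mul_Sw, trace_sub, trace_Sw, trace_one]
  simp [Fintype.card_prod]

lemma trace_one_add_Sw_mul_Sw (d : ℕ) :
    ((1 + Sw d) * Sw d).trace = (d:ℂ) + (d:ℂ) * (d:ℂ) := by
  rw [add_mul, Matrix.one_mul, Sw_mul_Sw, trace_add, trace_Sw, trace_one]
  simp [Fintype.card_prod]

end Helpers


section Main

lemma Sw_one : Sw 1 = 1 := by
  ext p q
  have : p = q.swap := Subsingleton.elim _ _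
  have h2 : p = q := Subsingleton.elim _ _
  simp [Sw, this, h2, Matrix.one_apply, Subsingleton.elim q.swap q]

lemma choi_zero {da db : ℕ} :
    choi (0 : Matrix (Fin da) (Fin da) ℂ →ₗ[ℂ] Matrix (Fin db) (Fin db) ℂ) = 0 := by
  ext p q; simp [choi]

lemma isCPTNI_zero {da db : ℕ} :
    IsCPTNI (0 : Matrix (Fin da) (Fin da) ℂ →ₗ[ℂ] Matrix (Fin db) (Fin db) ℂ) := by
  constructor
  · rw [choi_zero]; exact Matrix.PosSemidef.zero
  · rw [choi_zero]
    show ((1 : Matrix (Fin da) (Fin da) ℂ) - ptraceB 0).PosSemidef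
    have : ptraceB (0 : Matrix (Fin da × Fin db) (Fin da × Fin db) ℂ) = 0 := by
      ext i j; simp [ptraceB]
    rw [this, sub_zero]
    exact Matrix.PosSemidef.one

lemma loewner_one_one {n : Type*} [Fintype n] [DecidableEq n] :
    Loewner (1 : Matrix n n ℂ) 1 := by
  show ((1 : Matrix n n ℂ) - 1).PosSemidef
  rw [sub_self]; exact Matrix.PosSemidef.zero

/-- CPTNI from a Choi matrix of the form `↑c • (1 ± Sw d)`. -/
lemma isCPTNI_of_choi_smul_one_add {d : ℕ} (c : ℝ) (hc : 0 ≤ c) (hc1 : c * ((d:ℝ) + 1) = 1)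
    {Λ : Matrix (Fin d) (Fin d) ℂ →ₗ[ℂ] Matrix (Fin d) (Fin d) ℂ}
    (h : choi Λ = (c : ℂ) • (1 + Sw d)) : IsCPTNI Λ := by
  constructor
  · rw [h]; exact psd_smul hc (one_add_Sw_psd d)
  · rw [h, ptraceB_smul, ptraceB_add, ptraceB_one, ptraceB_Sw]
    have : (c:ℂ) • ((d:ℂ) • (1 : Matrix (Fin d) (Fin d) ℂ) + 1)
        = (((c * ((d:ℝ)+1)) : ℝ) : ℂ) • 1 := by
      rw [← one_smul ℂ (1 : Matrix (Fin d) (Fin d) ℂ)]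
      rw [smul_smul, ← add_smul, smul_smul]
      push_cast
      rw [one_smul]
      ring_nf
    rw [this, hc1]
    push_cast
    rw [one_smul]
    exact loewner_one_one

lemma isCPTNI_of_choi_smul_one_sub {d : ℕ} (hd : 0 < d) (c : ℝ) (hc : 0 ≤ c)
    (hc1 : c * ((d:ℝ) - 1) ≤ 1)
    {Λ : Matrix (Fin d) (Fin d) ℂ →ₗ[ℂ] Matrix (Fin d) (Fin d) ℂ}
    (h : choi Λ = (c : ℂ) • (1 - Sw d)) : IsCPTNI Λ := by
  have hd1 : (1:ℝ) ≤ (d:ℝ) := by exact_mod_cast hd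
  constructor
  · rw [h]; exact psd_smul hc (one_sub_Sw_psd d)
  · rw [h, ptraceB_smul, ptraceB_sub, ptraceB_one, ptraceB_Sw]
    have : (c:ℂ) • ((d:ℂ) • (1 : Matrix (Fin d) (Fin d) ℂ) - 1)
        = (((c * ((d:ℝ)-1)) : ℝ) : ℂ) • 1 := by
      rw [← one_smul ℂ (1 : Matrix (Fin d) (Fin d) ℂ)]
      rw [smul_smul, ← sub_smul, smul_smul]
      push_cast
      rw [one_smul]
      ring_nf
    rw [this]
    show ((1 : Matrix (Fin d) (Fin d) ℂ) - _).PosSemidef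
    have : (1 : Matrix (Fin d) (Fin d) ℂ) - (((c * ((d:ℝ)-1)) : ℝ) : ℂ) • 1
        = (((1 - c * ((d:ℝ)-1)) : ℝ) : ℂ) • 1 := by
      push_cast
      rw [sub_smul, one_smul]
    rw [this]
    exact psd_smul (by linarith) Matrix.PosSemidef.one

end Main


section LB

lemma rob_lower (d : ℕ) (hd : 0 < d) (x : ℝ)
    (hx : 0 ≤ x ∧ ∃ Λ : Matrix (Fin d) (Fin d) ℂ →ₗ[ℂ] Matrix (Fin d) (Fin d) ℂ, IsCPTNI Λ ∧
      IsCPTNI (((1 / (1 + x) : ℝ) : ℂ) • (transposeMap d + ((x : ℝ) : ℂ) • Λ))) :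
    ((d : ℝ) - 1) / 2 ≤ x := by
  obtain ⟨hx0, Λ, hΛ, hmix⟩ := hx
  have hd1 : (1:ℝ) ≤ (d:ℝ) := by exact_mod_cast hd
  set C := choi Λ with hC
  have hCpsd := hΛ.1
  have hCtr : C.trace ≤ (d:ℂ) := trace_choi_le hΛ
  have h1x : (0:ℝ) < 1 + x := by linarith
  have hM : (Sw d + (x:ℂ) • C).PosSemidef := by
    have hps := hmix.1
    rw [choi_smul, choi_add, choi_smul, choi_transposeMap] at hps
    have h2 : ((1+x : ℝ):ℂ) • (((1/(1+x) : ℝ):ℂ) • (Sw d + (x:ℂ) • C)) = Sw d + (x:ℂ) • C := by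
      rw [smul_smul, ← Complex.ofReal_mul,
        show (1+x) * (1/(1+x)) = 1 from by field_simp]
      simp
    rw [← h2]
    exact psd_smul (le_of_lt h1x) hps
  have hkey : 0 ≤ ((1 - Sw d) * (Sw d + (x:ℂ) • C)).trace :=
    psd_trace_mul_nonneg (one_sub_Sw_psd d) hM
  have hexp : ((1 - Sw d) * (Sw d + (x:ℂ) • C)).trace
      = ((d:ℂ) - (d:ℂ) * (d:ℂ)) + (x:ℂ) * ((1 - Sw d) * C).trace := by
    rw [mul_add, trace_add, trace_one_sub_Sw_mul_Sw, Matrix.mul_smul, trace_smul, smul_eq_mul]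
  rw [hexp] at hkey
  have hb := (pairing_bound hCpsd hCtr).1
  have hx0' : (0:ℂ) ≤ (x:ℂ) := Complex.zero_le_real.mpr hx0
  have h3 : (x:ℂ) * ((1 - Sw d) * C).trace ≤ (x:ℂ) * (2 * (d:ℂ)) :=
    mul_le_mul_of_nonneg_left hb hx0'
  have h4 : (0:ℂ) ≤ ((d:ℂ) - (d:ℂ) * (d:ℂ)) + (x:ℂ) * (2 * (d:ℂ)) :=
    le_trans hkey (add_le_add_right h3 _)
  have h5 : (0:ℝ) ≤ ((d:ℝ) - (d:ℝ) * (d:ℝ)) + x * (2 * (d:ℝ)) := by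
    rw [show ((d:ℂ) - (d:ℂ) * (d:ℂ)) + (x:ℂ) * (2 * (d:ℂ))
        = ((((d:ℝ) - (d:ℝ) * (d:ℝ)) + x * (2 * (d:ℝ)) : ℝ) : ℂ) from by push_cast; ring] at h4
    exact Complex.zero_le_real.mp h4
  nlinarith [h5, hd1]

lemma norm_lower (d : ℕ) (hd : 0 < d) (s : ℝ)
    (hs : ∃ lp lm : ℝ, ∃ Λp Λm : Matrix (Fin d) (Fin d) ℂ →ₗ[ℂ] Matrix (Fin d) (Fin d) ℂ,
      0 ≤ lp ∧ 0 ≤ lm ∧ IsCPTNI Λp ∧ IsCPTNI Λm ∧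
      transposeMap d = (lp : ℂ) • Λp - (lm : ℂ) • Λm ∧ s = lp + lm) :
    (d : ℝ) ≤ s := by
  obtain ⟨lp, lm, Λp, Λm, hlp, hlm, hp, hm, heq, hseq⟩ := hs
  have hd1 : (1:ℝ) ≤ (d:ℝ) := by exact_mod_cast hd
  set Cp := choi Λp with hCp
  set Cm := choi Λm with hCm
  have hchoi : Sw d = (lp:ℂ) • Cp - (lm:ℂ) • Cm := by
    rw [← choi_transposeMap d, heq, choi_sub, choi_smul, choi_smul]
  have hCppsd := hp.1
  have hCmpsd := hm.1
  have hCptr := trace_choi_le hp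
  have hCmtr := trace_choi_le hm
  have hlp' : (0:ℂ) ≤ (lp:ℂ) := Complex.zero_le_real.mpr hlp
  have hlm' : (0:ℂ) ≤ (lm:ℂ) := Complex.zero_le_real.mpr hlm
  -- bound on lp
  have e1 : (lp:ℂ) • Cp = Sw d + (lm:ℂ) • Cm := by rw [hchoi]; abel
  have t1 : ((1 + Sw d) * ((lp:ℂ) • Cp)).trace
      = ((d:ℂ) + (d:ℂ) * (d:ℂ)) + (lm:ℂ) * ((1 + Sw d) * Cm).trace := by
    rw [e1, mul_add, trace_add, trace_one_add_Sw_mul_Sw, Matrix.mul_smul, trace_smul, smul_eq_mul]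
  have g1 : ((d:ℂ) + (d:ℂ) * (d:ℂ)) ≤ (lp:ℂ) * (2 * (d:ℂ)) := by
    have hnn : 0 ≤ (lm:ℂ) * ((1 + Sw d) * Cm).trace :=
      mul_nonneg hlm' (psd_trace_mul_nonneg (one_add_Sw_psd d) hCmpsd)
    have step1 : ((d:ℂ) + (d:ℂ) * (d:ℂ)) ≤ ((1 + Sw d) * ((lp:ℂ) • Cp)).trace := by
      rw [t1]; exact le_add_of_nonneg_right hnn
    have step2 : ((1 + Sw d) * ((lp:ℂ) • Cp)).trace = (lp:ℂ) * ((1 + Sw d) * Cp).trace := by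
      rw [Matrix.mul_smul, trace_smul, smul_eq_mul]
    rw [step2] at step1
    exact le_trans step1 (mul_le_mul_of_nonneg_left (pairing_bound hCppsd hCptr).2 hlp')
  -- bound on lm
  have e2 : (lm:ℂ) • Cm = (lp:ℂ) • Cp - Sw d := by rw [hchoi]; abel
  have t2 : ((1 - Sw d) * ((lm:ℂ) • Cm)).trace
      = (lp:ℂ) * ((1 - Sw d) * Cp).trace - ((d:ℂ) - (d:ℂ) * (d:ℂ)) := by
    rw [e2, mul_sub, trace_sub, trace_one_sub_Sw_mul_Sw, Matrix.mul_smul, trace_smul, smul_eq_mul]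
  have g2 : ((d:ℂ) * (d:ℂ) - (d:ℂ)) ≤ (lm:ℂ) * (2 * (d:ℂ)) := by
    have hnn : 0 ≤ (lp:ℂ) * ((1 - Sw d) * Cp).trace :=
      mul_nonneg hlp' (psd_trace_mul_nonneg (one_sub_Sw_psd d) hCppsd)
    have step1 : ((d:ℂ) * (d:ℂ) - (d:ℂ)) ≤ ((1 - Sw d) * ((lm:ℂ) • Cm)).trace := by
      rw [t2]
      have : ((d:ℂ) * (d:ℂ) - (d:ℂ)) = 0 - ((d:ℂ) - (d:ℂ) * (d:ℂ)) := by ring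
      rw [this]
      exact sub_le_sub_right hnn _
    have step2 : ((1 - Sw d) * ((lm:ℂ) • Cm)).trace = (lm:ℂ) * ((1 - Sw d) * Cm).trace := by
      rw [Matrix.mul_smul, trace_smul, smul_eq_mul]
    rw [step2] at step1
    exact le_trans step1 (mul_le_mul_of_nonneg_left (pairing_bound hCmpsd hCmtr).1 hlm')
  -- convert to ℝ
  have r1 : ((d:ℝ) + (d:ℝ) * (d:ℝ)) ≤ lp * (2 * (d:ℝ)) := by
    have := g1
    rw [show ((d:ℂ) + (d:ℂ) * (d:ℂ)) = ((((d:ℝ) + (d:ℝ) * (d:ℝ)) : ℝ) : ℂ) from by push_cast; ring,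
      show ((lp:ℂ) * (2 * (d:ℂ))) = (((lp * (2 * (d:ℝ))) : ℝ) : ℂ) from by push_cast; ring] at this
    exact Complex.real_le_real.mp this
  have r2 : ((d:ℝ) * (d:ℝ) - (d:ℝ)) ≤ lm * (2 * (d:ℝ)) := by
    have := g2
    rw [show ((d:ℂ) * (d:ℂ) - (d:ℂ)) = ((((d:ℝ) * (d:ℝ) - (d:ℝ)) : ℝ) : ℂ) from by push_cast; ring,
      show ((lm:ℂ) * (2 * (d:ℂ))) = (((lm * (2 * (d:ℝ))) : ℝ) : ℂ) from by push_cast; ring] at this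
    exact Complex.real_le_real.mp this
  subst hseq
  nlinarith [r1, r2, hd1]

end LB


section Mem

lemma cast_sub_one_ne {d : ℕ} (hd2 : 2 ≤ d) : ((d:ℂ) - 1) ≠ 0 := by
  have : (2:ℝ) ≤ (d:ℝ) := by exact_mod_cast hd2
  rw [show ((d:ℂ) - 1) = ((((d:ℝ) - 1) : ℝ) : ℂ) from by push_cast; ring]
  exact Complex.ofReal_ne_zero.mpr (by linarith)

lemma cast_add_one_ne (d : ℕ) : ((d:ℂ) + 1) ≠ 0 := by
  rw [show ((d:ℂ) + 1) = ((((d:ℝ) + 1) : ℝ) : ℂ) from by push_cast; ring]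
  exact Complex.ofReal_ne_zero.mpr (by positivity)

lemma choi_lam_sub (d : ℕ) (c : ℝ) :
    choi ((((c : ℝ) : ℂ)) • (trMap d - transposeMap d)) = (c : ℂ) • (1 - Sw d) := by
  rw [choi_smul, choi_sub, choi_trMap, choi_transposeMap]

lemma choi_lam_add (d : ℕ) (c : ℝ) :
    choi ((((c : ℝ) : ℂ)) • (trMap d + transposeMap d)) = (c : ℂ) • (1 + Sw d) := by
  rw [choi_smul, choi_add, choi_trMap, choi_transposeMap]

lemma rob_mem (d : ℕ) (hd2 : 2 ≤ d) :
    0 ≤ ((d:ℝ) - 1) / 2 ∧ ∃ Λ : Matrix (Fin d) (Fin d) ℂ →ₗ[ℂ] Matrix (Fin d) (Fin d) ℂ,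
      IsCPTNI Λ ∧ IsCPTNI (((1 / (1 + ((d:ℝ) - 1) / 2) : ℝ) : ℂ) •
        (transposeMap d + ((((d:ℝ) - 1) / 2 : ℝ) : ℂ) • Λ)) := by
  have hdr : (2:ℝ) ≤ (d:ℝ) := by exact_mod_cast hd2
  have hne : ((d:ℝ) - 1) ≠ 0 := by linarith
  have hne1 : ((d:ℝ) + 1) ≠ 0 := by linarith
  refine ⟨by linarith, (((((d:ℝ) - 1)⁻¹ : ℝ)) : ℂ) • (trMap d - transposeMap d), ?_, ?_⟩
  · exact isCPTNI_of_choi_smul_one_sub (by omega) _ (by rw [inv_nonneg]; linarith)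
      (le_of_eq (inv_mul_cancel₀ hne)) (choi_lam_sub d _)
  · apply isCPTNI_of_choi_smul_one_add (((d:ℝ) + 1)⁻¹) (by positivity)
      (inv_mul_cancel₀ hne1)
    rw [choi_smul, choi_add, choi_smul, choi_transposeMap, choi_lam_sub]
    have hc1 : ((d:ℂ) - 1) ≠ 0 := cast_sub_one_ne hd2
    have hc2 : ((d:ℂ) + 1) ≠ 0 := cast_add_one_ne d
    ext p q
    simp only [Matrix.smul_apply, Matrix.add_apply, Matrix.sub_apply, smul_eq_mul]
    have hc3 : ((d:ℂ)^2*2 - 2) ≠ 0 := by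
      have h := mul_ne_zero hc1 hc2
      intro h0
      exact h (by linear_combination h0/2)
    have hc4 : (-2 + (d:ℂ)^2*2) ≠ 0 := by
      intro h0; exact hc3 (by linear_combination h0)
    push_cast
    field_simp [hc1, hc2, hc3, hc4]
    rw [div_eq_iff (by rw [show (2:ℂ) + ((d:ℂ) - 1) = (d:ℂ) + 1 by ring]; exact hc2)]
    ring
  
lemma norm_mem (d : ℕ) (hd2 : 2 ≤ d) :
    ∃ lp lm : ℝ, ∃ Λp Λm : Matrix (Fin d) (Fin d) ℂ →ₗ[ℂ] Matrix (Fin d) (Fin d) ℂ,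
      0 ≤ lp ∧ 0 ≤ lm ∧ IsCPTNI Λp ∧ IsCPTNI Λm ∧
      transposeMap d = (lp : ℂ) • Λp - (lm : ℂ) • Λm ∧ (d:ℝ) = lp + lm := by
  have hdr : (2:ℝ) ≤ (d:ℝ) := by exact_mod_cast hd2
  have hne : ((d:ℝ) - 1) ≠ 0 := by linarith
  have hne1 : ((d:ℝ) + 1) ≠ 0 := by linarith
  have hc1 : ((d:ℂ) - 1) ≠ 0 := cast_sub_one_ne hd2
  have hc2 : ((d:ℂ) + 1) ≠ 0 := cast_add_one_ne d
  refine ⟨((d:ℝ) + 1) / 2, ((d:ℝ) - 1) / 2,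
    (((((d:ℝ) + 1)⁻¹ : ℝ)) : ℂ) • (trMap d + transposeMap d),
    (((((d:ℝ) - 1)⁻¹ : ℝ)) : ℂ) • (trMap d - transposeMap d),
    by linarith, by linarith, ?_, ?_, ?_, by linarith⟩
  · exact isCPTNI_of_choi_smul_one_add _ (by positivity) (inv_mul_cancel₀ hne1)
      (choi_lam_add d _)
  · exact isCPTNI_of_choi_smul_one_sub (by omega) _ (by rw [inv_nonneg]; linarith)
      (le_of_eq (inv_mul_cancel₀ hne)) (choi_lam_sub d _)
  · apply LinearMap.ext
    intro X
    ext i j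
    simp only [transposeMap, trMap, LinearMap.coe_mk, AddHom.coe_mk, LinearMap.sub_apply,
      LinearMap.smul_apply, LinearMap.add_apply, Matrix.smul_apply, Matrix.add_apply,
      Matrix.sub_apply, Matrix.transpose_apply, smul_eq_mul]
    push_cast
    field_simp
    ring

end Mem


/-- for the transposition map `T` on dimension `d`,
`R(T) = (d-1)/2` and `‖T‖_CPTNI = d`. -/
theorem transposeMap_robustness_and_norm (d : ℕ) (hd : 0 < d) :
    robustnessCPTNI (transposeMap d) = ((d : ℝ) - 1) / 2 ∧
    cptniNorm (transposeMap d) = (d : ℝ) := by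
  have hT1 : ∀ h : d = 1, IsCPTNI (transposeMap d) := by
    rintro rfl
    apply isCPTNI_of_choi_smul_one_add (1/2 : ℝ) (by norm_num) (by norm_num)
    rw [choi_transposeMap, Sw_one,
      show (1 : Matrix (Fin 1 × Fin 1) (Fin 1 × Fin 1) ℂ) + 1 = (2:ℂ) • 1 from
        (two_smul ℂ _).symm, smul_smul]
    norm_num
  constructor
  · -- robustness
    have hlb : ∀ x ∈ {l : ℝ | 0 ≤ l ∧
        ∃ Λ : Matrix (Fin d) (Fin d) ℂ →ₗ[ℂ] Matrix (Fin d) (Fin d) ℂ, IsCPTNI Λ ∧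
          IsCPTNI (((1 / (1 + l) : ℝ) : ℂ) • (transposeMap d + ((l : ℝ) : ℂ) • Λ))},
        ((d:ℝ) - 1) / 2 ≤ x := fun x hx => rob_lower d hd x hx
    have hmem : (((d:ℝ) - 1) / 2) ∈ {l : ℝ | 0 ≤ l ∧
        ∃ Λ : Matrix (Fin d) (Fin d) ℂ →ₗ[ℂ] Matrix (Fin d) (Fin d) ℂ, IsCPTNI Λ ∧
          IsCPTNI (((1 / (1 + l) : ℝ) : ℂ) • (transposeMap d + ((l : ℝ) : ℂ) • Λ))} := by
      rcases eq_or_lt_of_le (Nat.succ_le_of_lt hd) with h1 | h2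
      · -- d = 1
        have hd1 : d = 1 := h1.symm
        subst hd1
        refine ⟨by norm_num, transposeMap 1, hT1 rfl, ?_⟩
        apply isCPTNI_of_choi_smul_one_add (1/2 : ℝ) (by norm_num) (by norm_num)
        rw [choi_smul, choi_add, choi_smul, choi_transposeMap, Sw_one]
        ext p q
        simp only [Matrix.smul_apply, Matrix.add_apply, smul_eq_mul]
        push_cast
        ring
      · exact rob_mem d h2
    exact le_antisymm (csInf_le ⟨((d:ℝ) - 1) / 2, hlb⟩ hmem) (le_csInf ⟨_, hmem⟩ hlb)
  · -- norm
    have hlb : ∀ x ∈ {s : ℝ | ∃ lp lm : ℝ,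
        ∃ Λp Λm : Matrix (Fin d) (Fin d) ℂ →ₗ[ℂ] Matrix (Fin d) (Fin d) ℂ,
        0 ≤ lp ∧ 0 ≤ lm ∧ IsCPTNI Λp ∧ IsCPTNI Λm ∧
        transposeMap d = (lp : ℂ) • Λp - (lm : ℂ) • Λm ∧ x = lp + lm},
        (d:ℝ) ≤ x := by
      rintro x ⟨lp, lm, Λp, Λm, h1, h2, h3, h4, h5, h6⟩
      exact norm_lower d hd x ⟨lp, lm, Λp, Λm, h1, h2, h3, h4, h5, h6⟩
    have hmem : ((d:ℝ)) ∈ {s : ℝ | ∃ lp lm : ℝ,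
        ∃ Λp Λm : Matrix (Fin d) (Fin d) ℂ →ₗ[ℂ] Matrix (Fin d) (Fin d) ℂ,
        0 ≤ lp ∧ 0 ≤ lm ∧ IsCPTNI Λp ∧ IsCPTNI Λm ∧
        transposeMap d = (lp : ℂ) • Λp - (lm : ℂ) • Λm ∧ s = lp + lm} := by
      rcases eq_or_lt_of_le (Nat.succ_le_of_lt hd) with h1 | h2
      · have hd1 : d = 1 := h1.symm
        subst hd1
        exact ⟨1, 0, transposeMap 1, 0, by norm_num, le_refl 0, hT1 rfl, isCPTNI_zero,
          by push_cast; simp, by norm_num⟩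
      · exact norm_mem d h2
    exact le_antisymm (csInf_le ⟨(d:ℝ), hlb⟩ hmem) (le_csInf ⟨_, hmem⟩ hlb)
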